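/- (Descent lemma for inexact proximal gradient, version 1) Let f: R^d -> R be L-Lipschitz differentiable and r: R^d -> R be convex. Let x_{k+1} = prox_{r/L}(x_k - (1/L) hat{g}_k), where hat{g}_k is an approximation of g_k = nabla f(x_k). Then F = f + r satisfies F(x_{k+1}) <= F(x_k) - (1/(4L)) ||hat{Delta}_k||_2^2 + (1/L) ||g_k - hat{g}_k||_2^2, where hat{Delta}_k = L (x_{k+1} - x_k). -/

import Mathlib

open scoped RealInnerProductSpace

section aux

variable {d : ℕ}

-- derivative of f along a line, expressed via the gradient
lemma line_hasDerivAt {f : EuclideanSpace ℝ (Fin d) → ℝ}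
    (hdiff : Differentiable ℝ f) (x u : EuclideanSpace ℝ (Fin d)) (t : ℝ) :
    HasDerivAt (fun s : ℝ => f (x + s • u)) ⟪gradient f (x + t • u), u⟫ t := by
  have hc : HasDerivAt (fun s : ℝ => x + s • u) u t := by
    simpa using ((hasDerivAt_id t).smul_const u).const_add x
  have hf : HasFDerivAt f (InnerProductSpace.toDual ℝ _ (gradient f (x + t • u))) (x + t • u) :=
    (hasGradientAt_iff_hasFDerivAt).mp (hdiff _).hasGradientAt
  exact hf.comp_hasDerivAt t hc

/-- Descent lemma for L-Lipschitz gradient. -/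
lemma descent_lemma {f : EuclideanSpace ℝ (Fin d) → ℝ} {L : ℝ} (hL : 0 < L)
    (hdiff : Differentiable ℝ f)
    (hlip : ∀ x y, ‖gradient f x - gradient f y‖ ≤ L * ‖x - y‖)
    (x y : EuclideanSpace ℝ (Fin d)) :
    f y ≤ f x + ⟪gradient f x, y - x⟫ + L / 2 * ‖y - x‖ ^ 2 := by
  set u := y - x with hu
  set φ : ℝ → ℝ := fun t => f (x + t • u) - t * ⟪gradient f x, u⟫ - L / 2 * t ^ 2 * ‖u‖ ^ 2
    with hφ
  have hder : ∀ t : ℝ, HasDerivAt φ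
      (⟪gradient f (x + t • u), u⟫ - ⟪gradient f x, u⟫ - L / 2 * (2 * t) * ‖u‖ ^ 2) t := by
    intro t
    have h1 := line_hasDerivAt hdiff x u t
    have h2 : HasDerivAt (fun t : ℝ => t * ⟪gradient f x, u⟫) ⟪gradient f x, u⟫ t := by
      simpa using (hasDerivAt_id t).mul_const _
    have h3 : HasDerivAt (fun t : ℝ => L / 2 * t ^ 2 * ‖u‖ ^ 2)
        (L / 2 * (2 * t) * ‖u‖ ^ 2) t := by
      have := ((hasDerivAt_pow 2 t).const_mul (L / 2)).mul_const (‖u‖ ^ 2)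
      simpa [mul_comm, mul_assoc, mul_left_comm] using this
    exact (h1.sub h2).sub h3
  have hmono : φ 1 ≤ φ 0 := by
    have : AntitoneOn φ (Set.Icc 0 1) := by
      apply antitoneOn_of_deriv_nonpos (convex_Icc 0 1)
      · exact (Differentiable.continuous fun t => (hder t).differentiableAt).continuousOn
      · intro t ht
        exact (hder t).differentiableAt.differentiableWithinAt
      · intro t ht
        rw [interior_Icc] at ht
        rw [(hder t).deriv]
        have hbound : ⟪gradient f (x + t • u) - gradient f x, u⟫ ≤ L * t * ‖u‖ ^ 2 := by
          calc ⟪gradient f (x + t • u) - gradient f x, u⟫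
              ≤ ‖gradient f (x + t • u) - gradient f x‖ * ‖u‖ :=
                real_inner_le_norm _ _
            _ ≤ (L * ‖(x + t • u) - x‖) * ‖u‖ := by
                have := hlip (x + t • u) x
                exact mul_le_mul_of_nonneg_right this (norm_nonneg _)
            _ = L * t * ‖u‖ ^ 2 := by
                have : ‖(x + t • u) - x‖ = t * ‖u‖ := by
                  simp [norm_smul, abs_of_pos ht.1]
                rw [this]; ring
        have : ⟪gradient f (x + t • u), u⟫ - ⟪gradient f x, u⟫ =
            ⟪gradient f (x + t • u) - gradient f x, u⟫ := by
          rw [inner_sub_left]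
        rw [this]
        nlinarith [hbound]
    exact this (by norm_num) (by norm_num) (by norm_num)
  have h0 : φ 0 = f x := by simp [hφ]
  have h1 : φ 1 = f y - ⟪gradient f x, u⟫ - L / 2 * ‖u‖ ^ 2 := by
    simp [hφ, hu]
  rw [h0, h1] at hmono
  linarith

end aux

/-- Descent lemma for inexact proximal gradient, version 1. -/
theorem prox_descent_v1 {d : ℕ} (L : ℝ) (hL : 0 < L)
    (f r : EuclideanSpace ℝ (Fin d) → ℝ)
    (hdiff : Differentiable ℝ f)
    (hlip : ∀ x y, ‖gradient f x - gradient f y‖ ≤ L * ‖x - y‖)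
    (hr : ConvexOn ℝ Set.univ r)
    (xk xk1 ghat v : EuclideanSpace ℝ (Fin d))
    (hsub : ∀ y, r xk1 + ⟪v, y - xk1⟫ ≤ r y)
    (hstep : xk1 = xk - (1 / L) • (v + ghat)) :
    f xk1 + r xk1 ≤ f xk + r xk - (1 / (4 * L)) * ‖v + ghat‖ ^ 2
      + (1 / L) * ‖gradient f xk - ghat‖ ^ 2 := by
  set Δ := v + ghat with hΔ
  set g := gradient f xk with hg
  have hdiffxy : xk1 - xk = -(1 / L) • Δ := by
    rw [hstep]; module
  have hnorm : ‖xk1 - xk‖ ^ 2 = (1 / L) ^ 2 * ‖Δ‖ ^ 2 := by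
    rw [hdiffxy, norm_smul]
    simp [abs_of_pos hL]
    ring
  have hfd := descent_lemma hL hdiff hlip xk xk1
  have hrd := hsub xk
  -- inner products
  have hinner_f : ⟪g, xk1 - xk⟫ = -(1 / L) * ⟪g, Δ⟫ := by
    rw [hdiffxy, real_inner_smul_right]
  have hinner_r : ⟪v, xk - xk1⟫ = (1 / L) * ⟪v, Δ⟫ := by
    have : xk - xk1 = (1 / L) • Δ := by rw [hstep]; module
    rw [this, real_inner_smul_right]
  have key : ⟪g, Δ⟫ + ⟪v, Δ⟫ = ⟪g - ghat, Δ⟫ + ‖Δ‖ ^ 2 := by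
    have : ⟪g, Δ⟫ + ⟪v, Δ⟫ = ⟪g - ghat, Δ⟫ + ⟪ghat + v, Δ⟫ := by
      rw [inner_sub_left, inner_add_left]; ring
    rw [this]
    have : ⟪ghat + v, Δ⟫ = ‖Δ‖ ^ 2 := by
      rw [hΔ, show ghat + v = v + ghat from by abel, real_inner_self_eq_norm_sq]
    rw [this]
  have cauchy : -⟪g - ghat, Δ⟫ ≤ ‖g - ghat‖ ^ 2 + (1 / 4) * ‖Δ‖ ^ 2 := by
    have h1 : -⟪g - ghat, Δ⟫ ≤ ‖g - ghat‖ * ‖Δ‖ := by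
      have := real_inner_le_norm (g - ghat) (-Δ)
      simpa [inner_neg_right] using this
    nlinarith [norm_nonneg (g - ghat), norm_nonneg Δ, sq_nonneg (‖g - ghat‖ - ‖Δ‖ / 2)]
  have hLinv : (0:ℝ) < 1 / L := by positivity
  -- combine
  have hsum : f xk1 + r xk1 ≤ f xk + r xk + ⟪g, xk1 - xk⟫ - ⟪v, xk - xk1⟫
      + L / 2 * ‖xk1 - xk‖ ^ 2 := by
    have : r xk1 ≤ r xk - ⟪v, xk - xk1⟫ := by linarith [hrd]
    linarith [hfd]
  rw [hinner_f, hinner_r, hnorm] at hsum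
  have hL2 : L / 2 * ((1 / L) ^ 2 * ‖Δ‖ ^ 2) = (1 / (2 * L)) * ‖Δ‖ ^ 2 := by
    field_simp
  rw [hL2] at hsum
  have expand : -(1 / L) * ⟪g, Δ⟫ - (1 / L) * ⟪v, Δ⟫ =
      (1 / L) * (-⟪g - ghat, Δ⟫) - (1 / L) * ‖Δ‖ ^ 2 := by
    linear_combination (-(1 / L)) * key
  have hfinal : (1 / L) * (-⟪g - ghat, Δ⟫) ≤ (1 / L) * (‖g - ghat‖ ^ 2 + (1 / 4) * ‖Δ‖ ^ 2) :=
    mul_le_mul_of_nonneg_left cauchy (le_of_lt hLinv)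
  have harith : (1 / (2 * L)) * ‖Δ‖ ^ 2 - (1 / L) * ‖Δ‖ ^ 2 + (1 / L) * ((1/4) * ‖Δ‖ ^ 2)
      = -(1 / (4 * L)) * ‖Δ‖ ^ 2 := by field_simp; ring
  have haux : (1 / L) * (‖g - ghat‖ ^ 2 + (1 / 4) * ‖Δ‖ ^ 2)
      = (1 / L) * ‖g - ghat‖ ^ 2 + (1 / L) * ((1 / 4) * ‖Δ‖ ^ 2) := by ring
  linarith [hsum, hfinal, expand, harith, haux]
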